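/- Let K be a field of characteristic p > 0. The K-algebra endomorphism φ of K[X_1, X_2] defined by φ(X_1) = X_1 − X_1^p and φ(X_2) = X_2 preserves the canonical Poisson bracket {f,g} = ∂f/∂X_1 · ∂g/∂X_2 − ∂f/∂X_2 · ∂g/∂X_1, but φ is not an automorphism of K[X_1, X_2]. -/
import Mathlib

open MvPolynomial

/-- The canonical Poisson bracket on `K[X_1, X_2]`. -/
noncomputable def poissonBracket2 {K : Type*} [CommRing K]
    (f g : MvPolynomial (Fin 2) K) : MvPolynomial (Fin 2) K :=
  pderiv 0 f * pderiv 1 g - pderiv 1 f * pderiv 0 g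

/-- The endomorphism of `K[X_1, X_2]` with `X_1 ↦ X_1 − X_1^p`, `X_2 ↦ X_2`. -/
noncomputable def naivePoissonCounterexample (K : Type*) [CommRing K] (p : ℕ) :
    MvPolynomial (Fin 2) K →ₐ[K] MvPolynomial (Fin 2) K :=
  aeval (fun i : Fin 2 => if i = 0 then X 0 - X 0 ^ p else X 1)

lemma naive_cast_p {K : Type*} [Field K] (p : ℕ) [CharP K p] :
    (p : MvPolynomial (Fin 2) K) = 0 := by
  have := CharP.cast_eq_zero K p
  calc (p : MvPolynomial (Fin 2) K) = C (p : K) := by simp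
  _ = 0 := by rw [this, map_zero]

lemma pderiv_naive {K : Type*} [Field K] (p : ℕ) [Fact p.Prime] [CharP K p]
    (i : Fin 2) (f : MvPolynomial (Fin 2) K) :
    pderiv i (naivePoissonCounterexample K p f)
      = naivePoissonCounterexample K p (pderiv i f) := by
  have hp := naive_cast_p (K := K) p
  have hXj : ∀ j : Fin 2, pderiv i (naivePoissonCounterexample K p (X j))
      = naivePoissonCounterexample K p (pderiv i (X j)) := by
    intro j
    fin_cases j <;>
    · simp only [naivePoissonCounterexample, aeval_X, if_pos rfl, if_neg (by decide : ¬ (1 : Fin 2) = 0)]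
      fin_cases i <;>
        simp [pderiv_X, Derivation.leibniz_pow, Pi.single_apply, hp, nsmul_eq_mul,
          naivePoissonCounterexample]
  induction f using MvPolynomial.induction_on with
  | C a => simp [naivePoissonCounterexample]
  | add f g hf hg => simp [map_add, hf, hg]
  | mul_X f j hf =>
    rw [map_mul, Derivation.leibniz, Derivation.leibniz, hf, hXj]
    simp [map_add, map_mul, smul_eq_mul, mul_comm]

/-- over a field of characteristic `p > 0`, the endomorphism
`φ(X_1) = X_1 − X_1^p`, `φ(X_2) = X_2` of `K[X_1,X_2]` preserves the canonical
Poisson bracket, but is not an automorphism. -/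
theorem naive_poisson_conjecture_counterexample
    {K : Type*} [Field K] (p : ℕ) [Fact p.Prime] [CharP K p] :
    naivePoissonCounterexample K p (X 0) = X 0 - X 0 ^ p
    ∧ naivePoissonCounterexample K p (X 1) = X 1
    ∧ (∀ f g : MvPolynomial (Fin 2) K,
        poissonBracket2 (naivePoissonCounterexample K p f) (naivePoissonCounterexample K p g)
          = naivePoissonCounterexample K p (poissonBracket2 f g))
    ∧ ¬ Function.Bijective (naivePoissonCounterexample K p) := by
  refine ⟨by simp [naivePoissonCounterexample], by simp [naivePoissonCounterexample], ?_, ?_⟩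
  · intro f g
    simp only [poissonBracket2, pderiv_naive, map_sub, map_mul]
  · rintro ⟨-, hsurj⟩
    obtain ⟨g, hg⟩ := hsurj (X 0)
    -- push to one variable
    set e : MvPolynomial (Fin 2) K →ₐ[K] Polynomial K :=
      aeval (fun i : Fin 2 => if i = 0 then Polynomial.X else 0) with he
    set q : Polynomial K := Polynomial.X - Polynomial.X ^ p with hq
    have key : (Polynomial.aeval q).comp e = e.comp (naivePoissonCounterexample K p) := by
      apply MvPolynomial.algHom_ext
      intro j
      fin_cases j <;> simp [he, naivePoissonCounterexample, hq, map_sub, map_pow]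
    have h1 : Polynomial.aeval q (e g) = Polynomial.X := by
      have := congrArg (fun φ => φ g) key
      simp only [AlgHom.comp_apply] at this
      rw [this, hg]
      simp [he]
    have hqdeg : q.natDegree = p := by
      have hp2 : 2 ≤ p := (Fact.out : p.Prime).two_le
      rw [hq, Polynomial.natDegree_sub_eq_right_of_natDegree_lt] <;>
        simp [Nat.lt_of_lt_of_le one_lt_two hp2]
    have hcomp : (e g).comp q = Polynomial.X := by
      rw [Polynomial.comp_eq_aeval, h1]
    have := congrArg Polynomial.natDegree hcomp
    rw [Polynomial.natDegree_comp, hqdeg, Polynomial.natDegree_X] at this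
    have := Nat.eq_one_of_mul_eq_one_left this
    exact Nat.Prime.one_lt (Fact.out) |>.ne' this
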